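/- arXiv:2303.14577 — 2 statements merged into one kernel-verified Lean document; each statement's English description precedes it below -/
import Mathlib

section
/- In the metric setting, if χ : X → K is a big Ramsey colouring (persistent and universal) of an action of a monoid M on a complete metric space X by isometric embeddings, then K is the big Ramsey degree of the action, i.e., K is universal and K ≤ L for every universal compactum L. -/
/-- `K` is a universal compactum for the action `M ↷ X`. -/
def UnivCompactum (M X : Type) [Monoid M] [MulAction M X] [MetricSpace X]
    (K : Type) [MetricSpace K] [CompactSpace K] : Prop :=
  ∀ (L : Type) [MetricSpace L] [CompactSpace L] (ψ : X → L), LipschitzWith 1 ψ →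
    ∀ ε : ℝ, 0 < ε → ∃ (q : M) (χ : X → K) (f : K → L),
      LipschitzWith 1 χ ∧ LipschitzWith 1 f ∧
      ∀ x : X, dist (ψ (q • x)) (f (χ (q • x))) ≤ ε

/-- `χ : X → K` is a persistent colouring: `χ(p • X)` is dense for every `p`. -/
def PersistentCol (M X : Type) [Monoid M] [MulAction M X] [MetricSpace X]
    {K : Type} [MetricSpace K] (χ : X → K) : Prop :=
  ∀ p : M, Dense (Set.range (fun x : X => χ (p • x)))

/-- `χ : X → K` is a universal colouring. -/
def UniversalCol (M X : Type) [Monoid M] [MulAction M X] [MetricSpace X]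
    {K : Type} [MetricSpace K] (χ : X → K) : Prop :=
  ∀ (L : Type) [MetricSpace L] [CompactSpace L] (ψ : X → L), LipschitzWith 1 ψ →
    ∀ (p : M) (ε : ℝ), 0 < ε → ∃ (q : M) (f : K → L), LipschitzWith 1 f ∧
      ∀ x : X, dist (ψ ((p * q) • x)) (f (χ ((p * q) • x))) ≤ ε

theorem bigRamseyColouring_gives_degree
    (M X : Type) [Monoid M] [MulAction M X] [MetricSpace X] [CompleteSpace X]
    (hiso : ∀ p : M, Isometry (fun x : X => p • x))
    (K : Type) [MetricSpace K] [CompactSpace K]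
    (χ : X → K) (hχ : LipschitzWith 1 χ)
    (hpers : PersistentCol M X χ) (huniv : UniversalCol M X χ) :
    UnivCompactum M X K ∧
      ∀ (L : Type) [MetricSpace L] [CompactSpace L], UnivCompactum M X L →
        ∃ g : L → K, LipschitzWith 1 g ∧ Function.Surjective g := by
  constructor
  · intro L _ _ ψ hψ ε hε
    obtain ⟨q, f, hf, h⟩ := huniv L ψ hψ 1 ε hε
    exact ⟨q, χ, f, hχ, hf, by simpa using h⟩
  · intro L _ _ hL
    -- extract approximations at scale (n+1)⁻¹
    have hεpos : ∀ n : ℕ, (0 : ℝ) < ((n : ℝ) + 1)⁻¹ := fun n => by positivity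
    choose q cn fn hcn hfn hbound using fun n : ℕ => hL K χ hχ _ (hεpos n)
    set u : Ultrafilter ℕ := Ultrafilter.of Filter.atTop with hu
    have hule : (u : Filter ℕ) ≤ Filter.atTop := Ultrafilter.of_le _
    have hεlim : Filter.Tendsto (fun n : ℕ => ((n : ℝ) + 1)⁻¹) u (nhds 0) :=
      (tendsto_one_div_add_atTop_nhds_zero_nat.mono_left hule).congr
        (fun n => by rw [one_div])
    -- define g as ultrafilter limit of fn
    have key : ∀ l : L, ∃ k : K, Filter.Tendsto (fun n => fn n l) u (nhds k) := by
      intro l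
      obtain ⟨k, -, hk⟩ := isCompact_univ.ultrafilter_le_nhds (u.map fun n => fn n l)
        (by simp)
      exact ⟨k, hk⟩
    choose g hg using key
    have hglip : LipschitzWith 1 g := by
      apply LipschitzWith.of_dist_le_mul
      intro l l'
      have h1 : Filter.Tendsto (fun n => dist (fn n l) (fn n l')) u
          (nhds (dist (g l) (g l'))) := (hg l).dist (hg l')
      refine le_of_tendsto h1 (Filter.Eventually.of_forall fun n => ?_)
      simpa using (hfn n).dist_le_mul l l'
    refine ⟨g, hglip, ?_⟩
    intro k
    -- pick witnesses using persistence
    have hx : ∀ n : ℕ, ∃ x : X, dist k (χ (q n • x)) < ((n : ℝ) + 1)⁻¹ := by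
      intro n
      obtain ⟨y, hy, x, rfl⟩ := Metric.dense_iff.mp (hpers (q n)) k _ (hεpos n)
      exact ⟨x, by rw [dist_comm]; exact Metric.mem_ball.mp hy⟩
    choose x hxk using hx
    set ln : ℕ → L := fun n => cn n (q n • x n) with hln
    have hlnk : ∀ n, dist (fn n (ln n)) k ≤ 2 * ((n : ℝ) + 1)⁻¹ := by
      intro n
      calc dist (fn n (ln n)) k
          ≤ dist (fn n (ln n)) (χ (q n • x n)) + dist (χ (q n • x n)) k :=
            dist_triangle _ _ _
        _ ≤ ((n : ℝ) + 1)⁻¹ + ((n : ℝ) + 1)⁻¹ := by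
            refine add_le_add ?_ ?_
            · rw [dist_comm]; exact hbound n (x n)
            · rw [dist_comm]; exact (hxk n).le
        _ = 2 * ((n : ℝ) + 1)⁻¹ := by ring
    obtain ⟨l, -, hl⟩ := isCompact_univ.ultrafilter_le_nhds (u.map ln) (by simp)
    have hl' : Filter.Tendsto ln u (nhds l) := hl
    refine ⟨l, ?_⟩
    have hmaj : ∀ n : ℕ, dist (g l) k ≤
        dist (g l) (fn n l) + dist l (ln n) + 2 * ((n : ℝ) + 1)⁻¹ := by
      intro n
      calc dist (g l) k
          ≤ dist (g l) (fn n l) + dist (fn n l) k := dist_triangle _ _ _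
        _ ≤ dist (g l) (fn n l) + (dist (fn n l) (fn n (ln n)) + dist (fn n (ln n)) k) :=
            by gcongr; exact dist_triangle _ _ _
        _ ≤ dist (g l) (fn n l) + (dist l (ln n) + 2 * ((n : ℝ) + 1)⁻¹) := by
            gcongr
            · simpa using (hfn n).dist_le_mul l (ln n)
            · exact hlnk n
        _ = dist (g l) (fn n l) + dist l (ln n) + 2 * ((n : ℝ) + 1)⁻¹ := by ring
    have htend : Filter.Tendsto
        (fun n => dist (g l) (fn n l) + dist l (ln n) + 2 * ((n : ℝ) + 1)⁻¹) u
        (nhds (0 + 0 + 2 * 0)) := by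
      refine Filter.Tendsto.add (Filter.Tendsto.add ?_ ?_) ?_
      · simpa using ((tendsto_const_nhds : Filter.Tendsto (fun _ : ℕ => g l) u (nhds (g l))).dist (hg l))
      · simpa using ((tendsto_const_nhds : Filter.Tendsto (fun _ : ℕ => l) u (nhds l)).dist hl')
      · exact hεlim.const_mul 2
    have : dist (g l) k ≤ 0 := by
      refine ge_of_tendsto (by simpa using htend) (Filter.Eventually.of_forall hmaj)
    exact dist_le_zero.mp this
end

section
/- For a monoid M acting by isometric embeddings on a complete metric space X, if χ : X → K is a universal colouring and ψ : X → L is a persistent colouring (K, L compacta), then L ≤ K, i.e., there is a 1-Lipschitz surjection K → L. -/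
theorem persistent_le_universal_metric
    (M X : Type) [Monoid M] [MulAction M X] [MetricSpace X] [CompleteSpace X]
    (hiso : ∀ p : M, Isometry (fun x : X => p • x))
    (K L : Type) [MetricSpace K] [CompactSpace K] [MetricSpace L] [CompactSpace L]
    (χ : X → K) (hχ : LipschitzWith 1 χ) (huniv : UniversalCol M X χ)
    (ψ : X → L) (hψ : LipschitzWith 1 ψ) (hpers : PersistentCol M X ψ) :
    ∃ f : K → L, LipschitzWith 1 f ∧ Function.Surjective f := by
  classical
  -- extract approximating maps
  have H : ∀ n : ℕ, ∃ (q : M) (f : K → L), LipschitzWith 1 f ∧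
      ∀ x : X, dist (ψ ((1 * q) • x)) (f (χ ((1 * q) • x))) ≤ 1 / (n + 1) := by
    intro n
    exact huniv L ψ hψ 1 (1 / (n + 1)) (by positivity)
  choose q f hf hfd using H
  -- the set of 1-Lipschitz continuous maps K → L is compact
  set S : Set C(K, L) := {g | LipschitzWith 1 ⇑g} with hS
  have hSpt : ContinuousMap.toFun '' S = {g : K → L | LipschitzWith 1 g} := by
    ext g
    constructor
    · rintro ⟨h, hh, rfl⟩; exact hh
    · intro hg; exact ⟨⟨g, hg.continuous⟩, hg, rfl⟩
  have hclosed : IsClosed {g : K → L | LipschitzWith 1 g} := by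
    have : {g : K → L | LipschitzWith 1 g} =
        ⋂ (x : K) (y : K), {g : K → L | dist (g x) (g y) ≤ dist x y} := by
      ext g
      simp only [Set.mem_iInter, Set.mem_setOf_eq]
      rw [lipschitzWith_iff_dist_le_mul]
      simp
    rw [this]
    refine isClosed_iInter fun x => isClosed_iInter fun y => ?_
    exact isClosed_le (by fun_prop) continuous_const
  have hScomp : IsCompact S := by
    refine ArzelaAscoli.isCompact_of_equicontinuous S ?_ ?_
    · rw [hSpt]
      exact hclosed.isCompact
    · apply Metric.equicontinuous_of_continuity_modulus id (by
        simpa using (Filter.tendsto_id : Filter.Tendsto id (nhds (0:ℝ)) (nhds 0)))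
      rintro x y ⟨g, hg⟩
      simpa using (lipschitzWith_iff_dist_le_mul.1 hg) x y
  -- extract a convergent subsequence
  set F : ℕ → C(K, L) := fun n => ⟨f n, (hf n).continuous⟩ with hF
  have hFS : ∀ n, F n ∈ S := fun n => hf n
  obtain ⟨g, hgS, φ, hφ, hconv⟩ := hScomp.tendsto_subseq hFS
  refine ⟨⇑g, hgS, ?_⟩
  -- surjectivity
  have hrange : IsClosed (Set.range ⇑g) :=
    (isCompact_range g.continuous).isClosed
  have hdense : Dense (Set.range ⇑g) := by
    rw [Metric.dense_iff]
    intro y ε hε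
    have hε3 : 0 < ε / 3 := by linarith
    -- pick n with dist (F (φ n)) g < ε/3 and 1/(φ n + 1) < ε/3
    obtain ⟨N, hN⟩ := Metric.tendsto_atTop.1 hconv (ε / 3) hε3
    obtain ⟨N', hN'⟩ := exists_nat_one_div_lt hε3
    set n := max N N'
    have h1 : dist (F (φ n)) g < ε / 3 := hN n (le_max_left _ _)
    have h2 : (1 : ℝ) / (φ n + 1) < ε / 3 := by
      have : (1 : ℝ) / (φ n + 1) ≤ 1 / (N' + 1) := by
        apply one_div_le_one_div_of_le (by positivity)
        have := hφ.le_apply (x := n)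
        have h3 : (N' : ℝ) ≤ φ n := by
          exact_mod_cast le_trans (le_max_right N N') this
        linarith
      linarith [hN']
    -- use persistence to find a point close to y
    obtain ⟨z, hz, hzr⟩ := Metric.dense_iff.1 (hpers (1 * q (φ n))) y (ε / 3) hε3
    obtain ⟨x, hx⟩ := hzr
    refine ⟨g (χ ((1 * q (φ n)) • x)), Metric.mem_ball.2 ?_, Set.mem_range_self _⟩
    have hb1 : dist (g (χ ((1 * q (φ n)) • x))) (f (φ n) (χ ((1 * q (φ n)) • x))) ≤
        dist (F (φ n)) g := by
      rw [dist_comm]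
      exact ContinuousMap.dist_apply_le_dist (f := F (φ n)) (g := g) _
    have hb2 := hfd (φ n) x
    have hb3 : dist (ψ ((1 * q (φ n)) • x)) y < ε / 3 := by
      rw [← hx] at hz
      simpa [Metric.mem_ball] using hz
    calc dist (g (χ ((1 * q (φ n)) • x))) y
        ≤ dist (g (χ ((1 * q (φ n)) • x))) (f (φ n) (χ ((1 * q (φ n)) • x)))
          + dist (f (φ n) (χ ((1 * q (φ n)) • x))) (ψ ((1 * q (φ n)) • x))
          + dist (ψ ((1 * q (φ n)) • x)) y := dist_triangle4 _ _ _ _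
      _ < ε / 3 + ε / 3 + ε / 3 := by
          refine add_lt_add (add_lt_add (hb1.trans_lt h1) ?_) hb3
          rw [dist_comm]
          exact lt_of_le_of_lt hb2 h2
      _ = ε := by ring
  intro y
  have : y ∈ closure (Set.range ⇑g) := hdense y
  rwa [hrange.closure_eq] at this
end
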